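/- Let P be a pospace (a poset with a topology making the order relation closed in P × P), with the upper convexity. If K is a closed convex (= upper) subset of P and A ⊆ K is compact with K equal to the closed convex hull of A, then A contains all extreme points of K, i.e. Min K ⊆ A. -/

import Mathlib

/-- In a pospace, the upper set generated by a compact set is closed. -/
lemma isClosed_upperHull_of_isCompact {P : Type*} [PartialOrder P] [TopologicalSpace P]
    (hpo : IsClosed {p : P × P | p.1 ≤ p.2})
    {A : Set P} (hAc : IsCompact A) :
    IsClosed {x | ∃ a ∈ A, a ≤ x} := by
  rw [← isOpen_compl_iff, isOpen_iff_mem_nhds]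
  intro x hx
  simp only [Set.mem_compl_iff, Set.mem_setOf_eq, not_exists, not_and] at hx
  have hU : IsOpen {p : P × P | p.1 ≤ p.2}ᶜ := hpo.isOpen_compl
  have h : {p : P × P | p.1 ≤ p.2}ᶜ ∈ (nhdsSet A) ×ˢ (nhds x) := by
    refine hAc.mem_nhdsSet_prod_of_forall fun a ha => ?_
    rw [← nhds_prod_eq]
    exact hU.mem_nhds (hx a ha)
  obtain ⟨t, ht, v, hv, hsub⟩ := Filter.mem_prod_iff.mp h
  refine Filter.mem_of_superset hv fun y hy => ?_
  simp only [Set.mem_compl_iff, Set.mem_setOf_eq, not_exists, not_and]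
  intro a ha hle
  exact hsub (Set.mk_mem_prod (subset_of_mem_nhdsSet ht ha) hy) hle

/-- Milman's converse for pospaces with the upper convexity: if a closed upper set `K`
is the closed upper hull of a compact set `A ⊆ K`, then `A` contains all minimal
(extreme) points of `K`. -/
theorem milman_posets {P : Type*} [PartialOrder P] [TopologicalSpace P]
    (hpo : IsClosed {p : P × P | p.1 ≤ p.2})
    (K : Set P) (hKc : IsClosed K) (hKu : IsUpperSet K)
    (A : Set P) (hAK : A ⊆ K) (hAc : IsCompact A)
    (hK : K = closure {x | ∃ a ∈ A, a ≤ x}) :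
    {m | m ∈ K ∧ ∀ b ∈ K, b ≤ m → b = m} ⊆ A := by
  intro m ⟨hmK, hmin⟩
  have hclosed := isClosed_upperHull_of_isCompact hpo hAc
  rw [hK, hclosed.closure_eq] at hmK
  obtain ⟨a, haA, hale⟩ := hmK
  rwa [← hmin a (hAK haA) hale]
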